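/- arXiv:2508.16091 — 2 statements merged into one kernel-verified Lean document; each statement's English description precedes it below -/
import Mathlib

section
/- For a regular matrix pencil (E, A), i.e., square matrices E, A ∈ ℝ^{n×n} with det(λE − A) ≠ 0 for some λ ∈ ℂ, there exist invertible matrices S, P ∈ ℝ^{n×n} such that SEP = diag(I_q, N) and SAP = diag(A₁, I_r) where N ∈ ℝ^{r×r} is nilpotent and q + r = n. -/
open Matrix

open Polynomial

lemma exists_real_lambda (n : ℕ) (E A : Matrix (Fin n) (Fin n) ℝ)
    (hreg : ∃ lam : ℂ,
      (lam • E.map (Complex.ofReal) - A.map (Complex.ofReal)).det ≠ 0) :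
    ∃ l : ℝ, IsUnit (l • E - A).det := by
  obtain ⟨lam, hlam⟩ := hreg
  set p : Polynomial ℝ := ((X : ℝ[X]) • E.map C - A.map C).det with hp
  have hmap : ∀ (S : Type) [inst : CommRing S] [Algebra ℝ S] (x : S),
      (aeval x) p = ((x • E.map (algebraMap ℝ S) - A.map (algebraMap ℝ S))).det := by
    intro S _ _ x
    rw [hp, AlgHom.map_det]
    congr 1
    ext i j
    simp [Matrix.map_apply, smul_eq_mul]
    ring
  have hp0 : p ≠ 0 := by
    intro h
    apply hlam
    have := hmap ℂ lam
    rw [h] at this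
    have h2 : (algebraMap ℝ ℂ) = Complex.ofReal := rfl
    rw [h2] at this
    simpa using this.symm.trans (by norm_num)
  obtain ⟨l, hl⟩ : ∃ l : ℝ, p.eval l ≠ 0 := by
    by_contra h
    push_neg at h
    exact hp0 (Polynomial.zero_of_eval_zero p h)
  refine ⟨l, ?_⟩
  have := hmap ℝ l
  simp only [Algebra.algebraMap_self, coe_aeval_eq_eval] at this
  have h3 : ∀ (B : Matrix (Fin n) (Fin n) ℝ), B.map (RingHom.id ℝ) = B := by
    intro B; ext i j; simp
  rw [h3, h3] at this
  rw [isUnit_iff_ne_zero, ← this]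
  exact hl

lemma fitting_matrix (n : ℕ) (F : Matrix (Fin n) (Fin n) ℝ) :
    ∃ (q r : ℕ) (hqr : q + r = n) (U₀ V₀ : Matrix (Fin n) (Fin n) ℝ)
      (J : Matrix (Fin q) (Fin q) ℝ) (Nt : Matrix (Fin r) (Fin r) ℝ),
      U₀ * V₀ = 1 ∧ V₀ * U₀ = 1 ∧ IsUnit J ∧ IsNilpotent Nt ∧
      U₀ * F * V₀ = (fromBlocks J 0 0 Nt).submatrix
        (fun i => finSumFinEquiv.symm (Fin.cast hqr.symm i))
        (fun i => finSumFinEquiv.symm (Fin.cast hqr.symm i)) := by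
  classical
  set std := Pi.basisFun ℝ (Fin n)
  set f : (Fin n → ℝ) →ₗ[ℝ] (Fin n → ℝ) := Matrix.toLin std std F with hf
  obtain ⟨k, hk⟩ := Filter.eventually_atTop.mp f.eventually_isCompl_ker_pow_range_pow
  have hc : IsCompl (LinearMap.ker (f ^ (k+1))) (LinearMap.range (f ^ (k+1))) :=
    hk (k+1) (Nat.le_succ k)
  set Kr := LinearMap.ker (f ^ (k+1)) with hKr
  set Rg := LinearMap.range (f ^ (k+1)) with hRg
  have hcomm : f ^ (k+1) * f = f * f ^ (k+1) := (Commute.pow_self f (k+1)).eq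
  have hKstab : ∀ x ∈ Kr, f x ∈ Kr := by
    intro x hx
    rw [hKr, LinearMap.mem_ker] at hx ⊢
    rw [← Module.End.mul_apply, hcomm, Module.End.mul_apply, hx, map_zero]
  have hRstab : ∀ x ∈ Rg, f x ∈ Rg := by
    intro x hx
    rw [hRg, LinearMap.mem_range] at hx ⊢
    obtain ⟨y, rfl⟩ := hx
    exact ⟨f y, by rw [← Module.End.mul_apply, hcomm, Module.End.mul_apply]⟩
  set fr : Rg →ₗ[ℝ] Rg := f.restrict hRstab with hfr
  set fn : Kr →ₗ[ℝ] Kr := f.restrict hKstab with hfn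
  have hfn_nil : IsNilpotent fn := by
    refine ⟨k+1, ?_⟩
    rw [hfn, Module.End.pow_restrict]
    apply LinearMap.ext
    intro x
    apply Subtype.ext
    rw [LinearMap.restrict_coe_apply]
    simpa using x.2
  have hfr_inj : Function.Injective fr := by
    rw [← LinearMap.ker_eq_bot]
    rw [Submodule.eq_bot_iff]
    rintro ⟨x, hx⟩ hker
    have hfx : f x = 0 := by
      have := congrArg (Subtype.val) (LinearMap.mem_ker.mp hker)
      simpa [hfr, LinearMap.restrict_coe_apply] using this
    have hxK : x ∈ Kr := by
      rw [hKr, LinearMap.mem_ker, pow_succ, Module.End.mul_apply, hfx, map_zero]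
    have : x ∈ Kr ⊓ Rg := ⟨hxK, hx⟩
    rw [hc.inf_eq_bot] at this
    simpa using this
  have hfr_bij : Function.Bijective fr :=
    ⟨hfr_inj, (LinearMap.injective_iff_surjective).mp hfr_inj⟩
  have hfr_unit : IsUnit fr := (Module.End.isUnit_iff fr).mpr hfr_bij
  -- dimensions
  set q := Module.finrank ℝ Rg with hq
  set r := Module.finrank ℝ Kr with hr
  have hqr : q + r = n := by
    rw [hq, hr, add_comm, Submodule.finrank_add_eq_of_isCompl hc]
    simp [Module.finrank_fin_fun]
  -- bases
  set bq := Module.finBasis ℝ Rg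
  set br := Module.finBasis ℝ Kr
  set pB := bq.prod br with hpB
  set φ := Submodule.prodEquivOfIsCompl Rg Kr hc.symm with hφ
  set b := pB.map φ with hb
  have hconj : (φ.symm : _ →ₗ[ℝ] _) ∘ₗ (f ∘ₗ (φ : _ →ₗ[ℝ] _)) = fr.prodMap fn := by
    apply LinearMap.ext
    rintro ⟨x, y⟩
    apply φ.injective
    simp only [LinearMap.comp_apply, LinearEquiv.coe_coe, LinearEquiv.apply_symm_apply]
    have hφ1 : ∀ z : Rg × Kr, φ z = z.1.1 + z.2.1 := by
      intro z
      rfl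
    rw [hφ1, hφ1]
    simp only [LinearMap.prodMap_apply]
    rw [map_add]
    congr 1 <;> simp [hfr, hfn, LinearMap.restrict_coe_apply]
  have key : LinearMap.toMatrix b b f =
      fromBlocks (LinearMap.toMatrix bq bq fr) 0 0 (LinearMap.toMatrix br br fn) := by
    rw [← LinearMap.toMatrix_prodMap bq br, ← hconj]
    ext i j
    rw [LinearMap.toMatrix_apply, LinearMap.toMatrix_apply, hb]
    simp only [Module.Basis.map_apply, Module.Basis.map_repr, LinearEquiv.trans_apply,
      LinearMap.comp_apply, LinearEquiv.coe_coe]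
    rfl
  set U : Matrix (Fin q ⊕ Fin r) (Fin n) ℝ := LinearMap.toMatrix std b LinearMap.id with hU
  set Vm : Matrix (Fin n) (Fin q ⊕ Fin r) ℝ := LinearMap.toMatrix b std LinearMap.id with hVm
  have hUV : U * Vm = 1 := by
    rw [hU, hVm, ← LinearMap.toMatrix_comp, LinearMap.id_comp, LinearMap.toMatrix_id]
  have hVU : Vm * U = 1 := by
    rw [hU, hVm, ← LinearMap.toMatrix_comp, LinearMap.id_comp, LinearMap.toMatrix_id]
  have hUFV : U * F * Vm = LinearMap.toMatrix b b f := by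
    have h1 : F = LinearMap.toMatrix std std f := by rw [hf, LinearMap.toMatrix_toLin]
    rw [h1, hU, hVm, ← LinearMap.toMatrix_comp, ← LinearMap.toMatrix_comp,
      LinearMap.comp_id, LinearMap.id_comp]
  set ε : Fin n ≃ (Fin q ⊕ Fin r) := (finCongr hqr.symm).trans finSumFinEquiv.symm with hε
  refine ⟨q, r, hqr, U.submatrix ε id, Vm.submatrix id ε,
    LinearMap.toMatrix bq bq fr, LinearMap.toMatrix br br fn, ?_, ?_, ?_, ?_, ?_⟩
  · have h := Matrix.submatrix_mul_equiv U Vm (⇑ε) (Equiv.refl (Fin n)) (⇑ε)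
    simp only [Equiv.coe_refl] at h
    rw [h, hUV, Matrix.submatrix_one_equiv]
  · have h := Matrix.submatrix_mul_equiv Vm U id ε id
    rw [h, hVU, Matrix.submatrix_id_id]
  · exact hfr_unit.map (LinearMap.toMatrixAlgEquiv bq)
  · exact hfn_nil.map (LinearMap.toMatrixAlgEquiv br)
  · have h1 := Matrix.submatrix_mul_equiv U F (⇑ε) (Equiv.refl (Fin n)) (id : Fin n → Fin n)
    have h2 := Matrix.submatrix_mul_equiv (U * F) Vm (⇑ε) (Equiv.refl (Fin n)) (⇑ε)
    simp only [Equiv.coe_refl] at h1 h2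
    rw [Matrix.submatrix_id_id] at h1
    rw [h1, h2, hUFV, key]
    rfl

/-- Quasi-Weierstrass form of a regular matrix pencil `(E, A)`. -/
theorem quasi_weierstrass_form (n : ℕ) (E A : Matrix (Fin n) (Fin n) ℝ)
    (hreg : ∃ lam : ℂ,
      (lam • E.map (Complex.ofReal) - A.map (Complex.ofReal)).det ≠ 0) :
    ∃ (q r : ℕ) (hqr : q + r = n) (S P : Matrix (Fin n) (Fin n) ℝ),
      IsUnit S ∧ IsUnit P ∧
      ∃ (A1 : Matrix (Fin q) (Fin q) ℝ) (N : Matrix (Fin r) (Fin r) ℝ),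
        IsNilpotent N ∧
        S * E * P =
          (Matrix.fromBlocks (1 : Matrix (Fin q) (Fin q) ℝ) 0 0 N).submatrix
            (fun i => finSumFinEquiv.symm (Fin.cast hqr.symm i))
            (fun i => finSumFinEquiv.symm (Fin.cast hqr.symm i)) ∧
        S * A * P =
          (Matrix.fromBlocks A1 0 0 (1 : Matrix (Fin r) (Fin r) ℝ)).submatrix
            (fun i => finSumFinEquiv.symm (Fin.cast hqr.symm i))
            (fun i => finSumFinEquiv.symm (Fin.cast hqr.symm i)) := by
  classical
  obtain ⟨l, hMdet⟩ := exists_real_lambda n E A hreg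
  set M : Matrix (Fin n) (Fin n) ℝ := l • E - A with hMdef
  have hMunit : IsUnit M := (Matrix.isUnit_iff_isUnit_det M).mpr hMdet
  have hMi : M⁻¹ * M = 1 := Matrix.nonsing_inv_mul M hMdet
  have hMi' : M * M⁻¹ = 1 := Matrix.mul_nonsing_inv M hMdet
  set F : Matrix (Fin n) (Fin n) ℝ := M⁻¹ * E with hFdef
  obtain ⟨q, r, hqr, U₀, V₀, J, Nt, hUV, hVU, hJ, hNt, hKey⟩ := fitting_matrix n F
  set ε : Fin n ≃ (Fin q ⊕ Fin r) := (finCongr hqr.symm).trans finSumFinEquiv.symm with hε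
  set d : Matrix (Fin q) (Fin q) ℝ → Matrix (Fin r) (Fin r) ℝ → Matrix (Fin n) (Fin n) ℝ :=
    fun X Y => (fromBlocks X 0 0 Y).submatrix ε ε with hd
  have hεfun : ∀ (X : Matrix (Fin q) (Fin q) ℝ) (Y : Matrix (Fin r) (Fin r) ℝ),
      (fromBlocks X 0 0 Y).submatrix
        (fun i => finSumFinEquiv.symm (Fin.cast hqr.symm i))
        (fun i => finSumFinEquiv.symm (Fin.cast hqr.symm i)) = d X Y := fun _ _ => rfl
  have hmul : ∀ X Y X' Y', d X Y * d X' Y' = d (X * X') (Y * Y') := by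
    intro X Y X' Y'
    rw [hd]
    simp only [Matrix.submatrix_mul_equiv, Matrix.fromBlocks_multiply]
    simp
  have hone : d 1 1 = 1 := by
    rw [hd]
    simp only [Matrix.fromBlocks_one, Matrix.submatrix_one_equiv]
  -- K and its inverse
  set K : Matrix (Fin r) (Fin r) ℝ := l • Nt - 1 with hK
  have hKunit : IsUnit K := (hNt.smul l).isUnit_sub_one
  have hKdet : IsUnit K.det := (Matrix.isUnit_iff_isUnit_det K).mp hKunit
  have hKi : K⁻¹ * K = 1 := Matrix.nonsing_inv_mul K hKdet
  have hKi' : K * K⁻¹ = 1 := Matrix.mul_nonsing_inv K hKdet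
  have hJdet : IsUnit J.det := (Matrix.isUnit_iff_isUnit_det J).mp hJ
  have hJi : J⁻¹ * J = 1 := Matrix.nonsing_inv_mul J hJdet
  have hNtK : Nt * K = K * Nt := by
    rw [hK]
    simp [mul_sub, sub_mul, mul_smul_comm, smul_mul_assoc]
  have hcomK : K⁻¹ * Nt = Nt * K⁻¹ := by
    calc K⁻¹ * Nt = K⁻¹ * Nt * (K * K⁻¹) := by rw [hKi', mul_one]
    _ = K⁻¹ * (Nt * K) * K⁻¹ := by simp only [Matrix.mul_assoc]
    _ = (K⁻¹ * K) * Nt * K⁻¹ := by rw [hNtK]; simp only [Matrix.mul_assoc]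
    _ = Nt * K⁻¹ := by rw [hKi, one_mul]
  set N : Matrix (Fin r) (Fin r) ℝ := K⁻¹ * Nt with hNdef
  have hNnil : IsNilpotent N := Commute.isNilpotent_mul_left hcomK hNt
  set S : Matrix (Fin n) (Fin n) ℝ := d J⁻¹ K⁻¹ * U₀ * M⁻¹ with hS
  -- units
  have hU₀ : IsUnit U₀ := by
    apply (Matrix.isUnit_iff_isUnit_det U₀).mpr
    exact IsUnit.of_mul_eq_one V₀.det (by rw [← Matrix.det_mul, hUV, Matrix.det_one])
  have hV₀ : IsUnit V₀ := by
    apply (Matrix.isUnit_iff_isUnit_det V₀).mpr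
    exact IsUnit.of_mul_eq_one U₀.det (by rw [← Matrix.det_mul, hVU, Matrix.det_one])
  have hdunit : IsUnit (d J⁻¹ K⁻¹) := by
    apply (Matrix.isUnit_iff_isUnit_det _).mpr
    refine IsUnit.of_mul_eq_one (d J K).det ?_
    rw [← Matrix.det_mul, hmul, hJi, hKi, hone, Matrix.det_one]
  have hMinv : IsUnit (M⁻¹ : Matrix (Fin n) (Fin n) ℝ) := by
    apply (Matrix.isUnit_iff_isUnit_det _).mpr
    exact IsUnit.of_mul_eq_one M.det (by rw [← Matrix.det_mul, hMi, Matrix.det_one])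
  -- key products
  have hSEP : S * E * V₀ = d 1 N := by
    have h1 : S * E * V₀ = d J⁻¹ K⁻¹ * (U₀ * F * V₀) := by
      rw [hS, hFdef]
      simp only [Matrix.mul_assoc]
    rw [h1, hKey, hεfun, hmul, hJi, hNdef]
  have hSMP : S * M * V₀ = d J⁻¹ K⁻¹ := by
    have h1 : S * M * V₀ = d J⁻¹ K⁻¹ * (U₀ * (M⁻¹ * M * V₀)) := by
      rw [hS]
      simp only [Matrix.mul_assoc]
    rw [h1, hMi, one_mul, hUV, mul_one]
  have hA : A = l • E - M := by rw [hMdef]; abel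
  have hSAP : S * A * V₀ = d (l • 1 - J⁻¹) 1 := by
    have h2 : S * A * V₀ = l • (S * E * V₀) - S * M * V₀ := by
      rw [hA, Matrix.mul_sub, Matrix.sub_mul, Matrix.mul_smul, Matrix.smul_mul]
    rw [h2, hSEP, hSMP]
    have h3 : l • d 1 N - d J⁻¹ K⁻¹ = d (l • 1 - J⁻¹) (l • N - K⁻¹) := by
      rw [hd]
      ext i j
      simp only [Matrix.sub_apply, Matrix.smul_apply, Matrix.submatrix_apply]
      rcases ε i with i'|i' <;> rcases ε j with j'|j' <;>
        simp [Matrix.fromBlocks]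
    have h4 : l • N - K⁻¹ = 1 := by
      calc l • N - K⁻¹ = l • (K⁻¹ * Nt) - K⁻¹ * 1 := by rw [← hNdef, mul_one]
      _ = K⁻¹ * (l • Nt) - K⁻¹ * 1 := by rw [mul_smul_comm]
      _ = K⁻¹ * (l • Nt - 1) := by rw [Matrix.mul_sub]
      _ = 1 := by rw [← hK, hKi]
    rw [h3, h4]
  refine ⟨q, r, hqr, S, V₀, ?_, hV₀, l • 1 - J⁻¹, N, hNnil, ?_, ?_⟩
  · exact (hdunit.mul hU₀).mul hMinv
  · rw [hSEP, hεfun]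
  · rw [hSAP, hεfun]
end

section
/- Let (u, y) be an input-output trajectory of a regular descriptor system in quasi-Weierstrass form with n = q + r. If there exists L ≥ max{q, r} such that rank[H_L(u_{[0,T−1]}); H_L(y_{[0,T−1]})] = n + mL, then both (A₁, C₁) and (N, C₂) are observable pairs, i.e., the system is C-observable. -/
open Matrix Finset

/-- Block Hankel matrix with `L` block rows and `c` columns built from the time
series `w` shifted by `t`. -/
def Hank (d : ℕ) (L c t : ℕ) (w : ℕ → Fin d → ℝ) : Matrix (Fin L × Fin d) (Fin c) ℝ :=
  fun ik j => w (t + (ik.1 : ℕ) + (j : ℕ)) ik.2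

/-- Stacked observability matrix with `L` block rows. -/
def obsMat {a b : ℕ} (C : Matrix (Fin a) (Fin b) ℝ) (A : Matrix (Fin b) (Fin b) ℝ)
    (L : ℕ) : Matrix (Fin L × Fin a) (Fin b) ℝ :=
  fun ki j => (C * A ^ (ki.1 : ℕ)) ki.2 j

/-! ### Auxiliary lemmas -/

lemma rank_eq_card_of_ker {α β : Type*} [Fintype α] [Fintype β]
    (M : Matrix α β ℝ) (h : ∀ v, M.mulVec v = 0 → v = 0) : M.rank = Fintype.card β := by
  have hker : LinearMap.ker M.mulVecLin = ⊥ := by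
    rw [LinearMap.ker_eq_bot']
    intro v hv
    exact h v hv
  have h2 := LinearMap.finrank_range_add_finrank_ker M.mulVecLin
  rw [hker, finrank_bot, add_zero, Module.finrank_pi] at h2
  unfold Matrix.rank
  exact h2

lemma ker_of_rank_eq_card {α β : Type*} [Fintype α] [Fintype β]
    (M : Matrix α β ℝ) (h : Fintype.card β ≤ M.rank) : ∀ v, M.mulVec v = 0 → v = 0 := by
  have h2 := LinearMap.finrank_range_add_finrank_ker M.mulVecLin
  rw [Module.finrank_pi] at h2
  have hle : M.rank ≤ Fintype.card β := M.rank_le_card_width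
  unfold Matrix.rank at hle h
  have hk0 : Module.finrank ℝ (LinearMap.ker M.mulVecLin) = 0 := by omega
  have hker : LinearMap.ker M.mulVecLin = ⊥ := Submodule.finrank_eq_zero.mp hk0
  intro v hv
  have : v ∈ LinearMap.ker M.mulVecLin := by
    simpa [LinearMap.mem_ker] using hv
  rw [hker] at this
  simpa using this

lemma sum_mulVec' {ι b b' : Type*} [Fintype b] (s : Finset ι)
    (f : ι → Matrix b' b ℝ) (v : b → ℝ) :
    (∑ i ∈ s, f i).mulVec v = ∑ i ∈ s, (f i).mulVec v := by
  ext x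
  simp only [Matrix.mulVec, dotProduct, Finset.sum_apply, Matrix.sum_apply,
    Finset.sum_mul]
  rw [Finset.sum_comm]

lemma mulVec_sum' {ι b b' : Type*} [Fintype b] (s : Finset ι)
    (M : Matrix b' b ℝ) (w : ι → b → ℝ) :
    M.mulVec (∑ i ∈ s, w i) = ∑ i ∈ s, M.mulVec (w i) := by
  rw [← Matrix.mulVecLin_apply, map_sum]
  exact Finset.sum_congr rfl fun t _ => by rw [Matrix.mulVecLin_apply]

lemma mulVec_csum {ι b b' : Type*} [Fintype b] (s : Finset ι)
    (M : Matrix b' b ℝ) (c : ι → ℝ) (w : ι → b → ℝ) :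
    M.mulVec (∑ i ∈ s, c i • w i) = ∑ i ∈ s, c i • M.mulVec (w i) := by
  rw [mulVec_sum']
  exact Finset.sum_congr rfl fun t _ => by rw [Matrix.mulVec_smul]

lemma obsMat_mulVec {a b L : ℕ} (C : Matrix (Fin a) (Fin b) ℝ)
    (A : Matrix (Fin b) (Fin b) ℝ) (v : Fin b → ℝ) (ki : Fin L × Fin a) :
    (obsMat C A L).mulVec v ki = C.mulVec ((A ^ (ki.1 : ℕ)).mulVec v) ki.2 := by
  rw [Matrix.mulVec_mulVec]
  rfl

/-- Cayley–Hamilton: output-zeroing of the first `b` powers propagates to all powers. -/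
lemma CH_ker {a b : ℕ} (C : Matrix (Fin a) (Fin b) ℝ) (A : Matrix (Fin b) (Fin b) ℝ)
    (v : Fin b → ℝ) (h : ∀ i, i < b → C.mulVec ((A ^ i).mulVec v) = 0) :
    ∀ i, C.mulVec ((A ^ i).mulVec v) = 0 := by
  rcases Nat.eq_zero_or_pos b with hb | hb
  · intro i
    have hv : v = 0 := by subst hb; exact funext fun x => x.elim0
    simp [hv]
  have hch := Matrix.aeval_self_charpoly A
  rw [Polynomial.aeval_eq_sum_range, Matrix.charpoly_natDegree_eq_dim, Fintype.card_fin,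
      Finset.sum_range_succ] at hch
  have hcoef : A.charpoly.coeff b = 1 := by
    have := (Matrix.charpoly_monic A).coeff_natDegree
    rwa [Matrix.charpoly_natDegree_eq_dim, Fintype.card_fin] at this
  rw [hcoef, one_smul] at hch
  have hAb : A ^ b = -∑ t ∈ range b, A.charpoly.coeff t • A ^ t :=
    eq_neg_of_add_eq_zero_right hch
  intro i
  induction i using Nat.strong_induction_on with
  | _ i ih =>
    rcases lt_or_ge i b with h' | h'
    · exact h i h'
    · have hi : A ^ i = A ^ (i - b) * A ^ b := by
        rw [← pow_add]; congr 1; omega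
      have hb' : (A ^ b).mulVec v = -∑ t ∈ range b, A.charpoly.coeff t • (A ^ t).mulVec v := by
        rw [hAb, Matrix.neg_mulVec, sum_mulVec']
        congr 1
        exact Finset.sum_congr rfl fun t _ => by rw [Matrix.smul_mulVec]
      have key : (A ^ i).mulVec v = -∑ t ∈ range b,
          A.charpoly.coeff t • (A ^ (i - b + t)).mulVec v := by
        rw [hi, ← Matrix.mulVec_mulVec, hb', Matrix.mulVec_neg, mulVec_csum]
        congr 1
        refine Finset.sum_congr rfl fun t ht => ?_
        rw [Matrix.mulVec_mulVec, ← pow_add]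
      rw [key, Matrix.mulVec_neg, mulVec_csum]
      have hzero : ∀ t ∈ range b,
          A.charpoly.coeff t • C.mulVec ((A ^ (i - b + t)).mulVec v) = 0 := by
        intro t ht
        rw [ih (i - b + t) (by simp at ht; omega), smul_zero]
      rw [Finset.sum_eq_zero hzero, neg_zero]

/-- If the `L`-row observability matrix has trivial kernel and `b ≤ L`, the
`b`-row observability matrix has full column rank. -/
lemma obs_reduce {a b : ℕ} (C : Matrix (Fin a) (Fin b) ℝ) (A : Matrix (Fin b) (Fin b) ℝ)
    (L : ℕ) (hL : b ≤ L)
    (hinj : ∀ v, (obsMat C A L).mulVec v = 0 → v = 0) : (obsMat C A b).rank = b := by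
  have h : ∀ v, (obsMat C A b).mulVec v = 0 → v = 0 := by
    intro v hv
    have hsmall : ∀ i, i < b → C.mulVec ((A ^ i).mulVec v) = 0 := by
      intro i hi
      funext x
      rw [← obsMat_mulVec C A v ((⟨i, hi⟩ : Fin b), x), hv]
      rfl
    have hall := CH_ker C A v hsmall
    apply hinj v
    funext ki
    rw [obsMat_mulVec, hall (ki.1 : ℕ)]
    rfl
  simpa using rank_eq_card_of_ker _ h

section fac
variable {q r m p : ℕ}

/-- Toeplitz coefficient of `u (t + j)` in block row `i` of `H_L(y)`. -/
def coefM (L : ℕ) (A1 : Matrix (Fin q) (Fin q) ℝ) (B1 : Matrix (Fin q) (Fin m) ℝ)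
    (C1 : Matrix (Fin p) (Fin q) ℝ) (N : Matrix (Fin r) (Fin r) ℝ)
    (B2 : Matrix (Fin r) (Fin m) ℝ) (C2 : Matrix (Fin p) (Fin r) ℝ)
    (D : Matrix (Fin p) (Fin m) ℝ) (i t : ℕ) : Matrix (Fin p) (Fin m) ℝ :=
  (if t < i then C1 * A1 ^ (i - 1 - t) * B1 else 0)
  + (if t = i then D else 0)
  + (if i ≤ t ∧ t < L - 1 then -(C2 * N ^ (t - i) * B2) else 0)

lemma ite_mulVec (P : Prop) [Decidable P] {a b : ℕ} (X : Matrix (Fin a) (Fin b) ℝ)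
    (v : Fin b → ℝ) :
    (if P then X else 0).mulVec v = if P then X.mulVec v else 0 := by
  split <;> simp

lemma slowLem (A1 : Matrix (Fin q) (Fin q) ℝ) (B1 : Matrix (Fin q) (Fin m) ℝ)
    (u : ℕ → Fin m → ℝ) (z1 : ℕ → Fin q → ℝ)
    (hslow : ∀ k : ℕ, z1 (k + 1) = A1.mulVec (z1 k) + B1.mulVec (u k)) :
    ∀ k i : ℕ, z1 (k + i) = (A1 ^ i).mulVec (z1 k)
      + ∑ t ∈ range i, (A1 ^ (i - 1 - t) * B1).mulVec (u (k + t)) := by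
  intro k i
  induction i with
  | zero => simp
  | succ i ih =>
    have hk : k + (i + 1) = (k + i) + 1 := by omega
    rw [hk, hslow, ih, Matrix.mulVec_add, Matrix.mulVec_mulVec, ← pow_succ',
      Finset.sum_range_succ]
    have h1 : A1.mulVec (∑ t ∈ range i, (A1 ^ (i - 1 - t) * B1).mulVec (u (k + t)))
        = ∑ t ∈ range i, (A1 ^ (i + 1 - 1 - t) * B1).mulVec (u (k + t)) := by
      rw [← Matrix.mulVecLin_apply, map_sum]
      refine Finset.sum_congr rfl fun t ht => ?_
      rw [Matrix.mulVecLin_apply, Matrix.mulVec_mulVec, ← Matrix.mul_assoc, ← pow_succ']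
      simp only [Finset.mem_range] at ht
      have he : i - 1 - t + 1 = i + 1 - 1 - t := by omega
      rw [he]
    rw [h1]
    have h2 : (A1 ^ (i + 1 - 1 - i) * B1).mulVec (u (k + i)) = B1.mulVec (u (k + i)) := by
      norm_num
    rw [h2]
    ring

lemma fastLem (N : Matrix (Fin r) (Fin r) ℝ) (B2 : Matrix (Fin r) (Fin m) ℝ)
    (u : ℕ → Fin m → ℝ) (z2 : ℕ → Fin r → ℝ)
    (hfast : ∀ k : ℕ, N.mulVec (z2 (k + 1)) = z2 k + B2.mulVec (u k)) :
    ∀ d k : ℕ, z2 k = (N ^ d).mulVec (z2 (k + d))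
      - ∑ t ∈ range d, (N ^ t * B2).mulVec (u (k + t)) := by
  intro d
  induction d with
  | zero => intro k; simp
  | succ d ih =>
    intro k
    have h0 : z2 k = N.mulVec (z2 (k + 1)) - B2.mulVec (u k) := by
      rw [hfast k]; ring
    rw [h0, ih (k + 1), Matrix.mulVec_sub, Matrix.mulVec_mulVec, ← pow_succ',
      Finset.sum_range_succ']
    have h1 : N.mulVec (∑ t ∈ range d, (N ^ t * B2).mulVec (u (k + 1 + t)))
        = ∑ t ∈ range d, (N ^ (t + 1) * B2).mulVec (u (k + (t + 1))) := by
      rw [← Matrix.mulVecLin_apply, map_sum]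
      refine Finset.sum_congr rfl fun t ht => ?_
      rw [Matrix.mulVecLin_apply, Matrix.mulVec_mulVec, ← Matrix.mul_assoc, ← pow_succ']
      have he : k + 1 + t = k + (t + 1) := by omega
      rw [he]
    rw [h1]
    have he : k + 1 + d = k + (d + 1) := by omega
    rw [he]
    simp
    ring

/-- Key row identity of the factorization. -/
lemma rowId (L : ℕ) (A1 : Matrix (Fin q) (Fin q) ℝ) (B1 : Matrix (Fin q) (Fin m) ℝ)
    (C1 : Matrix (Fin p) (Fin q) ℝ) (N : Matrix (Fin r) (Fin r) ℝ)
    (B2 : Matrix (Fin r) (Fin m) ℝ) (C2 : Matrix (Fin p) (Fin r) ℝ)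
    (D : Matrix (Fin p) (Fin m) ℝ)
    (u : ℕ → Fin m → ℝ) (y : ℕ → Fin p → ℝ)
    (z1 : ℕ → Fin q → ℝ) (z2 : ℕ → Fin r → ℝ)
    (hslow : ∀ k : ℕ, z1 (k + 1) = A1.mulVec (z1 k) + B1.mulVec (u k))
    (hfast : ∀ k : ℕ, N.mulVec (z2 (k + 1)) = z2 k + B2.mulVec (u k))
    (hout : ∀ k : ℕ, y k = C1.mulVec (z1 k) + C2.mulVec (z2 k) + D.mulVec (u k))
    (i j : ℕ) (hi : i < L) :
    y (i + j) = (C1 * A1 ^ i).mulVec (z1 j)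
      + (C2 * N ^ (L - 1 - i)).mulVec (z2 (j + (L - 1)))
      + ∑ t ∈ range L, (coefM L A1 B1 C1 N B2 C2 D i t).mulVec (u (t + j)) := by
  have hsplit : ∑ t ∈ range L, (coefM L A1 B1 C1 N B2 C2 D i t).mulVec (u (t + j))
      = (∑ t ∈ range i, (C1 * A1 ^ (i - 1 - t) * B1).mulVec (u (t + j)))
        + D.mulVec (u (i + j))
        + ∑ t ∈ Ico i (L - 1), -((C2 * N ^ (t - i) * B2).mulVec (u (t + j))) := by
    unfold coefM
    simp only [Matrix.add_mulVec, ite_mulVec, Matrix.neg_mulVec]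
    rw [Finset.sum_add_distrib, Finset.sum_add_distrib]
    congr 1
    congr 1
    · exact ((Finset.sum_subset (Finset.range_subset_range.2 hi.le)
          (fun x _ hx => if_neg (by simp at hx; omega))).symm).trans
        (Finset.sum_congr rfl fun t ht => if_pos (by simpa using ht))
    · rw [Finset.sum_ite_eq' (range L) i, if_pos (by simpa using hi)]
    · exact ((Finset.sum_subset
          (by intro x hx; simp at hx ⊢; omega : Ico i (L-1) ⊆ range L)
          (fun x hx hx' => if_neg (by simp at hx hx'; omega))).symm).trans
        (Finset.sum_congr rfl fun t ht => if_pos (by simpa using ht))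
  rw [hsplit]
  rw [hout (i + j)]
  have hz1 : C1.mulVec (z1 (i + j)) = (C1 * A1 ^ i).mulVec (z1 j)
      + ∑ t ∈ range i, (C1 * A1 ^ (i - 1 - t) * B1).mulVec (u (t + j)) := by
    have h := slowLem A1 B1 u z1 hslow j i
    have hj : i + j = j + i := by omega
    rw [hj, h, Matrix.mulVec_add, Matrix.mulVec_mulVec, mulVec_sum']
    congr 1
    refine Finset.sum_congr rfl fun t ht => ?_
    rw [Matrix.mulVec_mulVec, ← Matrix.mul_assoc]
    have : j + t = t + j := by omega
    rw [this]
  have hz2 : C2.mulVec (z2 (i + j)) = (C2 * N ^ (L - 1 - i)).mulVec (z2 (j + (L - 1)))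
      - ∑ t ∈ Ico i (L - 1), (C2 * N ^ (t - i) * B2).mulVec (u (t + j)) := by
    have h := fastLem N B2 u z2 hfast (L - 1 - i) (i + j)
    have hk : i + j + (L - 1 - i) = j + (L - 1) := by omega
    rw [hk] at h
    rw [h, Matrix.mulVec_sub, Matrix.mulVec_mulVec, mulVec_sum']
    congr 1
    rw [Finset.sum_Ico_eq_sum_range]
    refine Finset.sum_congr rfl fun t ht => ?_
    rw [Matrix.mulVec_mulVec, ← Matrix.mul_assoc]
    have h1 : i + t - i = t := by omega
    have h2 : i + j + t = i + t + j := by omega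
    rw [h1, h2]
  rw [hz1, hz2]
  rw [Finset.sum_neg_distrib]
  ring

/-- Reversed fast observability block. -/
def obsFast (L : ℕ) (N : Matrix (Fin r) (Fin r) ℝ) (C2 : Matrix (Fin p) (Fin r) ℝ) :
    Matrix (Fin L × Fin p) (Fin r) ℝ :=
  fun ia jr => (C2 * N ^ (L - 1 - (ia.1 : ℕ))) ia.2 jr

def Tmat (L : ℕ) (A1 : Matrix (Fin q) (Fin q) ℝ) (B1 : Matrix (Fin q) (Fin m) ℝ)
    (C1 : Matrix (Fin p) (Fin q) ℝ) (N : Matrix (Fin r) (Fin r) ℝ)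
    (B2 : Matrix (Fin r) (Fin m) ℝ) (C2 : Matrix (Fin p) (Fin r) ℝ)
    (D : Matrix (Fin p) (Fin m) ℝ) : Matrix (Fin L × Fin p) (Fin L × Fin m) ℝ :=
  fun ia tb => coefM L A1 B1 C1 N B2 C2 D (ia.1 : ℕ) (tb.1 : ℕ) ia.2 tb.2

def Qmat (L : ℕ) (A1 : Matrix (Fin q) (Fin q) ℝ) (B1 : Matrix (Fin q) (Fin m) ℝ)
    (C1 : Matrix (Fin p) (Fin q) ℝ) (N : Matrix (Fin r) (Fin r) ℝ)
    (B2 : Matrix (Fin r) (Fin m) ℝ) (C2 : Matrix (Fin p) (Fin r) ℝ)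
    (D : Matrix (Fin p) (Fin m) ℝ) :
    Matrix ((Fin L × Fin m) ⊕ (Fin L × Fin p)) ((Fin q ⊕ Fin r) ⊕ (Fin L × Fin m)) ℝ :=
  (Matrix.fromCols (0 : Matrix (Fin L × Fin m) (Fin q ⊕ Fin r) ℝ)
      (1 : Matrix (Fin L × Fin m) (Fin L × Fin m) ℝ)).fromRows
    (Matrix.fromCols
      ((obsMat C1 A1 L).fromCols (obsFast L N C2))
      (Tmat L A1 B1 C1 N B2 C2 D))

def Wmat (L c : ℕ) (u : ℕ → Fin m → ℝ) (z1 : ℕ → Fin q → ℝ) (z2 : ℕ → Fin r → ℝ) :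
    Matrix ((Fin q ⊕ Fin r) ⊕ (Fin L × Fin m)) (Fin c) ℝ :=
  ((Matrix.of fun a j => z1 (j : ℕ) a : Matrix (Fin q) (Fin c) ℝ).fromRows
      (Matrix.of fun a j => z2 ((j : ℕ) + (L - 1)) a : Matrix (Fin r) (Fin c) ℝ)).fromRows
    (Hank m L c 0 u)

lemma factor (L c : ℕ) (A1 : Matrix (Fin q) (Fin q) ℝ) (B1 : Matrix (Fin q) (Fin m) ℝ)
    (C1 : Matrix (Fin p) (Fin q) ℝ) (N : Matrix (Fin r) (Fin r) ℝ)
    (B2 : Matrix (Fin r) (Fin m) ℝ) (C2 : Matrix (Fin p) (Fin r) ℝ)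
    (D : Matrix (Fin p) (Fin m) ℝ)
    (u : ℕ → Fin m → ℝ) (y : ℕ → Fin p → ℝ)
    (z1 : ℕ → Fin q → ℝ) (z2 : ℕ → Fin r → ℝ)
    (hslow : ∀ k : ℕ, z1 (k + 1) = A1.mulVec (z1 k) + B1.mulVec (u k))
    (hfast : ∀ k : ℕ, N.mulVec (z2 (k + 1)) = z2 k + B2.mulVec (u k))
    (hout : ∀ k : ℕ, y k = C1.mulVec (z1 k) + C2.mulVec (z2 k) + D.mulVec (u k)) :
    (Hank m L c 0 u).fromRows (Hank p L c 0 y)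
      = Qmat L A1 B1 C1 N B2 C2 D * Wmat L c u z1 z2 := by
  unfold Qmat Wmat
  rw [Matrix.fromRows_mul, Matrix.fromCols_mul_fromRows, Matrix.fromCols_mul_fromRows,
    Matrix.fromCols_mul_fromRows, Matrix.zero_mul, Matrix.one_mul, zero_add]
  ext ia j
  cases ia with
  | inl tb => rw [Matrix.fromRows_apply_inl, Matrix.fromRows_apply_inl]
  | inr ia => ?_
  rw [Matrix.fromRows_apply_inr, Matrix.fromRows_apply_inr]
  obtain ⟨i, a⟩ := ia
  have hr := congrFun
    (rowId L A1 B1 C1 N B2 C2 D u y z1 z2 hslow hfast hout (i : ℕ) (j : ℕ) i.isLt) a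
  simp only [Pi.add_apply, Finset.sum_apply] at hr
  have e1 : (obsMat C1 A1 L *
        (Matrix.of fun a j => z1 (j : ℕ) a : Matrix (Fin q) (Fin c) ℝ)) (i, a) j
      = ((C1 * A1 ^ (i : ℕ)).mulVec (z1 (j : ℕ))) a := rfl
  have e2 : (obsFast L N C2 *
        (Matrix.of fun a j => z2 ((j : ℕ) + (L - 1)) a : Matrix (Fin r) (Fin c) ℝ)) (i, a) j
      = ((C2 * N ^ (L - 1 - (i : ℕ))).mulVec (z2 ((j : ℕ) + (L - 1)))) a := rfl
  have e3 : (Tmat L A1 B1 C1 N B2 C2 D * Hank m L c 0 u) (i, a) j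
      = ∑ t ∈ range L, ((coefM L A1 B1 C1 N B2 C2 D (i : ℕ) t).mulVec (u (t + (j : ℕ)))) a := by
    rw [Matrix.mul_apply, Fintype.sum_prod_type, ← Fin.sum_univ_eq_sum_range]
    refine Finset.sum_congr rfl fun t _ => ?_
    show ∑ b : Fin m, coefM L A1 B1 C1 N B2 C2 D (i : ℕ) (t : ℕ) a b * u (0 + (t : ℕ) + (j : ℕ)) b
      = _
    rw [Nat.zero_add]
    rfl
  show y (0 + (i : ℕ) + (j : ℕ)) a = _
  rw [Nat.zero_add, Matrix.add_apply, Matrix.add_apply, e1, e2, e3]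
  exact hr
end fac

/-- Theorem 4: data-driven sufficient condition for C-observability of a regular
descriptor system in quasi-Weierstrass form with `n = q + r`. -/
theorem data_driven_C_observability (q r m p s T : ℕ)
    (A1 : Matrix (Fin q) (Fin q) ℝ) (B1 : Matrix (Fin q) (Fin m) ℝ)
    (C1 : Matrix (Fin p) (Fin q) ℝ)
    (N : Matrix (Fin r) (Fin r) ℝ) (B2 : Matrix (Fin r) (Fin m) ℝ)
    (C2 : Matrix (Fin p) (Fin r) ℝ) (D : Matrix (Fin p) (Fin m) ℝ)
    (hN : N ^ s = 0)
    (u : ℕ → Fin m → ℝ) (y : ℕ → Fin p → ℝ)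
    (z1 : ℕ → Fin q → ℝ) (z2 : ℕ → Fin r → ℝ)
    (hslow : ∀ k : ℕ, z1 (k + 1) = A1.mulVec (z1 k) + B1.mulVec (u k))
    (hfast : ∀ k : ℕ, N.mulVec (z2 (k + 1)) = z2 k + B2.mulVec (u k))
    (hout : ∀ k : ℕ, y k = C1.mulVec (z1 k) + C2.mulVec (z2 k) + D.mulVec (u k))
    (hdata : ∃ L : ℕ, max q r ≤ L ∧
      (Matrix.fromRows (Hank m L (T - L + 1) 0 u) (Hank p L (T - L + 1) 0 y)).rank
        = (q + r) + m * L) :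
    (obsMat C1 A1 q).rank = q ∧ (obsMat C2 N r).rank = r := by
  obtain ⟨L, hL, hrank⟩ := hdata
  have hfac := factor L (T - L + 1) A1 B1 C1 N B2 C2 D u y z1 z2 hslow hfast hout
  rw [hfac] at hrank
  have h1 : (q + r) + m * L ≤ (Qmat L A1 B1 C1 N B2 C2 D).rank :=
    hrank ▸ Matrix.rank_mul_le_left _ _
  have hcard : Fintype.card ((Fin q ⊕ Fin r) ⊕ (Fin L × Fin m)) = (q + r) + m * L := by
    simp [mul_comm]
  have hker := ker_of_rank_eq_card (Qmat L A1 B1 C1 N B2 C2 D) (by rw [hcard]; exact h1)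
  -- slow observability kernel
  have hOs : ∀ v : Fin q → ℝ, (obsMat C1 A1 L).mulVec v = 0 → v = 0 := by
    intro v hv
    have hx := hker (Sum.elim (Sum.elim v 0) 0) ?_
    · exact funext fun a => congrFun hx (Sum.inl (Sum.inl a))
    · unfold Qmat
      rw [show (Sum.elim (Sum.elim v 0) 0 : ((Fin q ⊕ Fin r) ⊕ (Fin L × Fin m)) → ℝ)
          = Sum.elim (Sum.elim v 0) 0 from rfl]
      rw [Matrix.fromRows_mulVec, Matrix.fromCols_mulVec_sumElim,
        Matrix.fromCols_mulVec_sumElim, Matrix.fromCols_mulVec_sumElim]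
      simp [hv]
  -- fast observability kernel
  have hOf : ∀ v : Fin r → ℝ, (obsMat C2 N L).mulVec v = 0 → v = 0 := by
    intro v hv
    have hv' : (obsFast L N C2).mulVec v = 0 := by
      funext ia
      obtain ⟨i, a⟩ := ia
      have hlt : L - 1 - (i : ℕ) < L := by have := i.isLt; omega
      exact congrFun hv ((⟨L - 1 - (i : ℕ), hlt⟩ : Fin L), a)
    have hx := hker (Sum.elim (Sum.elim 0 v) 0) ?_
    · exact funext fun a => congrFun hx (Sum.inl (Sum.inr a))
    · unfold Qmat
      rw [Matrix.fromRows_mulVec, Matrix.fromCols_mulVec_sumElim,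
        Matrix.fromCols_mulVec_sumElim, Matrix.fromCols_mulVec_sumElim]
      simp [hv']
  exact ⟨obs_reduce C1 A1 L (le_trans (le_max_left q r) hL) hOs,
    obs_reduce C2 N L (le_trans (le_max_right q r) hL) hOf⟩
end
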